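/- arXiv:1409.0173 — 4 statements merged into one kernel-verified Lean document; each statement's English description precedes it below -/
import Mathlib

section
/- In the MBF analysis, with A = {v_{i_1},…,v_{i_k}} the MBF output listed in the order of selection, and with the sets Y_j, A_j*, and values c_j defined inductively from an optimal solution A* (Y_1 = A*; X_j = vertices of Y_j adjacent to v_{i_j}; A_j* = X_j if X_j ≠ ∅, else A_j* = {minimum-budget vertex of Y_j}; c_j = min budget in A_j*; Y_{j+1} = Y_j \ A_j*): for every j ≥ 1 with Y_j nonempty, b_{i_j} ≤ c_j. -/
/-- `S` is an independent set in `G`: no two vertices of `S` are adjacent. -/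
def SimpleGraph.IsIndepSet' {V : Type*} (G : SimpleGraph V) (S : Set V) : Prop :=
  ∀ u ∈ S, ∀ v ∈ S, ¬ G.Adj u v

attribute [local instance] Classical.propDecidable

/-- The greedy budgeted independent-set algorithm: process vertices in the given
order; stop as soon as the remaining budget is smaller than the budget of the
current vertex; otherwise select the current vertex if it is non-adjacent to all
previously selected vertices, spending its budget. Returns the selected vertices
in order of selection. (With the vertex list sorted in non-decreasing order of
budget this is the Minimum Budget First (MBF) algorithm.) -/
noncomputable def mbf {V : Type*} (G : SimpleGraph V) (b : V → ℕ) :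
    List V → List V → ℕ → List V
  | [], A, _ => A
  | v :: rest, A, rem =>
    if rem < b v then A
    else if ∀ u ∈ A, ¬ G.Adj v u then mbf G b rest (A ++ [v]) (rem - b v)
    else mbf G b rest A rem

lemma mbf_split {V : Type*} (G : SimpleGraph V) (b : V → ℕ) :
    ∀ (L A₀ : List V) (rem : ℕ), ∃ S, mbf G b L A₀ rem = A₀ ++ S ∧ S.Sublist L := by
  intro L
  induction L with
  | nil => intro A₀ rem; exact ⟨[], by simp [mbf], List.Sublist.refl _⟩
  | cons x rest ih =>
    intro A₀ rem
    by_cases h1 : rem < b x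
    · exact ⟨[], by simp [mbf, h1], List.nil_sublist _⟩
    · by_cases h2 : ∀ u ∈ A₀, ¬ G.Adj x u
      · obtain ⟨S, hS, hsub⟩ := ih (A₀ ++ [x]) (rem - b x)
        refine ⟨x :: S, ?_, List.Sublist.cons₂ _ hsub⟩
        rw [mbf, if_neg h1, if_pos h2, hS]
        simp
      · obtain ⟨S, hS, hsub⟩ := ih A₀ rem
        refine ⟨S, ?_, hsub.cons _⟩
        rw [mbf, if_neg h1, if_neg h2, hS]

lemma mbf_reject {V : Type*} (G : SimpleGraph V) (b : V → ℕ) :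
    ∀ (l1 A₀ : List V) (rem : ℕ) (u v : V) (l2 : List V),
      v ∈ l2 → (l1 ++ u :: l2).Nodup → v ∉ A₀ →
      u ∉ mbf G b (l1 ++ u :: l2) A₀ rem → v ∈ mbf G b (l1 ++ u :: l2) A₀ rem →
      ∃ w r1 r2, G.Adj u w ∧ mbf G b (l1 ++ u :: l2) A₀ rem = r1 ++ v :: r2 ∧ w ∈ r1 := by
  intro l1
  induction l1 with
  | nil =>
    intro A₀ rem u v l2 hv hnd hvA₀ hu hvR
    simp only [List.nil_append] at *
    by_cases h1 : rem < b u
    · rw [mbf, if_pos h1] at hvR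
      exact absurd hvR hvA₀
    · by_cases h2 : ∀ w ∈ A₀, ¬ G.Adj u w
      · exfalso
        rw [mbf, if_neg h1, if_pos h2] at hu
        obtain ⟨S, hS, _⟩ := mbf_split G b l2 (A₀ ++ [u]) (rem - b u)
        rw [hS] at hu
        simp at hu
      · push_neg at h2
        obtain ⟨w, hwA₀, hadj⟩ := h2
        rw [mbf, if_neg h1, if_neg (by push_neg; exact ⟨w, hwA₀, hadj⟩)] at hvR ⊢
        obtain ⟨S, hS, _⟩ := mbf_split G b l2 A₀ rem
        have hvS : v ∈ S := by
          rw [hS] at hvR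
          rcases List.mem_append.mp hvR with h | h
          · exact absurd h hvA₀
          · exact h
        obtain ⟨s1, s2, hs⟩ := List.append_of_mem hvS
        refine ⟨w, A₀ ++ s1, s2, hadj, ?_, by simp [hwA₀]⟩
        rw [hS, hs, List.append_assoc]
  | cons x l1' ih =>
    intro A₀ rem u v l2 hv hnd hvA₀ hu hvR
    rw [List.cons_append] at hu hvR ⊢
    by_cases h1 : rem < b x
    · rw [mbf, if_pos h1] at hvR
      exact absurd hvR hvA₀
    · have hndtail : (l1' ++ u :: l2).Nodup := (List.nodup_cons.mp hnd).2
      by_cases h2 : ∀ w ∈ A₀, ¬ G.Adj x w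
      · rw [mbf, if_neg h1, if_pos h2] at hvR hu ⊢
        have hvx : v ≠ x := by
          intro h
          have hxnot := (List.nodup_cons.mp hnd).1
          exact hxnot (h ▸ (List.mem_append.mpr (Or.inr (List.mem_cons_of_mem _ hv))))
        exact ih (A₀ ++ [x]) (rem - b x) u v l2 hv hndtail
          (by simp [hvA₀, hvx]) hu hvR
      · rw [mbf, if_neg h1, if_neg h2] at hvR hu ⊢
        exact ih A₀ rem u v l2 hv hndtail hvA₀ hu hvR
/-- MBF charging-argument lemma: let `A = [v_{i_1},…,v_{i_k}]` be the MBF output in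
order of selection on a `(d+1)`-claw free graph, `A*` an optimum `B`-budgeted
independent set disjoint from `A`, and let `Y_j`, `A_j*`, `c_j` be defined
inductively (`Y_1 = A*`; `A_j*` is the set `X_j` of vertices of `Y_j` adjacent to
`v_{i_j}` if nonempty, else the singleton of a minimum-budget vertex of `Y_j`;
`c_j` is the minimum budget in `A_j*`; `Y_{j+1} = Y_j \ A_j*`). Then for every
`j ≥ 1` with `Y_j` nonempty, `b_{i_j} ≤ c_j`. -/
theorem stmt_4 {n : ℕ} (hn : 0 < n) (G : SimpleGraph (Fin n)) (d : ℕ)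
    (hfree : IsEmpty (completeBipartiteGraph (Fin 1) (Fin (d + 1)) ↪g G))
    (b : Fin n → ℕ) (hb : ∀ v, 0 < b v) (hmono : Monotone b) (B : ℕ)
    (A : List (Fin n)) (hA : A = mbf G b (List.finRange n) [] B)
    (k : ℕ) (hk : k = A.length)
    (Astar : Finset (Fin n)) (hind : G.IsIndepSet' ↑Astar)
    (hbud : ∑ v ∈ Astar, b v ≤ B)
    (hopt : ∀ S : Finset (Fin n), G.IsIndepSet' ↑S → ∑ v ∈ S, b v ≤ B →
      S.card ≤ Astar.card)
    (hdisj : ∀ v ∈ A, v ∉ Astar)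
    (Y Aj : ℕ → Finset (Fin n))
    (hY1 : Y 1 = Astar)
    (hYsucc : ∀ j, Y (j + 1) = Y j \ Aj j)
    (hAjEmpty : ∀ j, Y j = ∅ → Aj j = ∅)
    (hAj : ∀ j, 1 ≤ j → j ≤ k → Y j ≠ ∅ →
      (((Y j).filter (fun u => G.Adj (A.getD (j - 1) ⟨0, hn⟩) u) ≠ ∅ ∧
        Aj j = (Y j).filter (fun u => G.Adj (A.getD (j - 1) ⟨0, hn⟩) u)) ∨
       ((Y j).filter (fun u => G.Adj (A.getD (j - 1) ⟨0, hn⟩) u) = ∅ ∧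
        ∃ m ∈ Y j, (∀ u ∈ Y j, b m ≤ b u) ∧ Aj j = {m})))
    (c : ℕ → ℕ)
    (hc : ∀ j, 1 ≤ j → j ≤ k → Y j ≠ ∅ →
      c j ∈ (Aj j).image b ∧ ∀ u ∈ Aj j, c j ≤ b u) :
    ∀ j, 1 ≤ j → j ≤ k → Y j ≠ ∅ → b (A.getD (j - 1) ⟨0, hn⟩) ≤ c j := by
  -- Y is antitone
  have hYanti : ∀ j₁ j₂ : ℕ, j₁ ≤ j₂ → Y j₂ ⊆ Y j₁ := by
    intro j₁ j₂ h
    induction h with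
    | refl => exact Finset.Subset.refl _
    | @step m h ih =>
      refine Finset.Subset.trans ?_ ih
      rw [hYsucc m]
      exact Finset.sdiff_subset
  -- A is nodup
  have hAnodup : A.Nodup := by
    obtain ⟨S, hS, hsub⟩ := mbf_split G b (List.finRange n) [] B
    rw [hA, hS, List.nil_append]
    exact hsub.nodup (List.nodup_finRange n)
  intro j hj1 hjk hYne
  have hjlen : j - 1 < A.length := by omega
  -- Key claim: every vertex of Y j has budget ≥ b (A[j-1])
  have key : ∀ u ∈ Y j, b (A.getD (j - 1) ⟨0, hn⟩) ≤ b u := by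
    intro u hu
    by_contra hlt
    push_neg at hlt
    set v := A.getD (j - 1) ⟨0, hn⟩ with hvdef
    have hvget : v = A[j-1] := List.getD_eq_getElem _ _ hjlen
    have huv : u < v := by
      by_contra h
      exact absurd (hmono (not_lt.mp h)) (not_le.mpr hlt)
    have hvA : v ∈ A := hvget ▸ List.getElem_mem hjlen
    have huAstar : u ∈ Astar := hY1 ▸ (hYanti 1 j hj1 hu)
    have huA : u ∉ A := fun h => hdisj u h huAstar
    -- decompose finRange at u
    have hfrlen : (List.finRange n).length = n := List.length_finRange
    have hdecomp : List.finRange n =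
        (List.finRange n).take u.val ++ u :: (List.finRange n).drop (u.val + 1) := by
      conv_lhs => rw [← List.take_append_drop u.val (List.finRange n)]
      congr 1
      rw [List.drop_eq_getElem_cons (by omega)]
      congr 1
      simp [List.getElem_finRange]
    have hvdrop : v ∈ (List.finRange n).drop (u.val + 1) := by
      have hlt2 : (v : ℕ) - (u : ℕ) - 1 < ((List.finRange n).drop (u.val + 1)).length := by
        rw [List.length_drop, hfrlen]
        have := v.isLt
        have : (u : ℕ) < (v : ℕ) := huv
        omega
      have : ((List.finRange n).drop (u.val + 1))[(v : ℕ) - (u : ℕ) - 1] = v := by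
        rw [List.getElem_drop]
        have hc : (u : ℕ) < (v : ℕ) := huv
        have : u.val + 1 + ((v : ℕ) - (u : ℕ) - 1) = (v : ℕ) := by omega
        simp_rw [this]
        simp [List.getElem_finRange]
      exact this ▸ List.getElem_mem hlt2
    have huR : u ∉ mbf G b ((List.finRange n).take u.val ++ u ::
        (List.finRange n).drop (u.val + 1)) [] B := by
      rw [← hdecomp, ← hA]; exact huA
    have hvR : v ∈ mbf G b ((List.finRange n).take u.val ++ u ::
        (List.finRange n).drop (u.val + 1)) [] B := by
      rw [← hdecomp, ← hA]; exact hvA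
    obtain ⟨w, r1, r2, hadj, hAeq, hwr1⟩ :=
      mbf_reject G b ((List.finRange n).take u.val) [] B u v
        ((List.finRange n).drop (u.val + 1)) hvdrop
        (hdecomp ▸ List.nodup_finRange n) (by simp) huR hvR
    rw [← hdecomp, ← hA] at hAeq
    -- r1.length = j - 1
    have hr1len : r1.length < A.length := by
      rw [hAeq]; simp
    have hAr1 : A[r1.length] = v := by
      rw [List.getElem_of_eq hAeq hr1len]
      rw [List.getElem_append_right (le_refl r1.length)]
      simp
    have hlens : r1.length = j - 1 := by
      have := List.Nodup.getElem_inj_iff hAnodup (hi := hr1len) (hj := hjlen)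
      exact this.mp (by rw [hAr1, hvget])
    -- w = A[i] for some i < j - 1
    have hwtake : w ∈ A.take (j - 1) := by
      rw [← hlens, hAeq, List.take_left]
      exact hwr1
    obtain ⟨i, hi, hwi⟩ := List.getElem_of_mem hwtake
    rw [List.length_take] at hi
    have hij : i < j - 1 := lt_of_lt_of_le hi (min_le_left _ _)
    have hiA : i < A.length := by omega
    rw [List.getElem_take] at hwi
    -- step j' := i + 1
    have hgetw : A.getD (i + 1 - 1) ⟨0, hn⟩ = w := by
      simpa using (List.getD_eq_getElem A ⟨0, hn⟩ hiA).trans hwi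
    have huYj' : u ∈ Y (i + 1) := hYanti (i + 1) j (by omega) hu
    have hYj'ne : Y (i + 1) ≠ ∅ := Finset.ne_empty_of_mem huYj'
    have hufilter : u ∈ (Y (i+1)).filter
        (fun x => G.Adj (A.getD (i + 1 - 1) ⟨0, hn⟩) x) := by
      rw [Finset.mem_filter]
      exact ⟨huYj', hgetw ▸ hadj.symm⟩
    rcases hAj (i + 1) (by omega) (by omega) hYj'ne with ⟨_, heq⟩ | ⟨hemp, _⟩
    · have huAj : u ∈ Aj (i + 1) := heq ▸ hufilter
      have : u ∉ Y (i + 1 + 1) := by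
        rw [hYsucc]
        simp [huAj]
      exact this (hYanti (i + 1 + 1) j (by omega) hu)
    · rw [hemp] at hufilter
      exact absurd hufilter (Finset.notMem_empty u)
  obtain ⟨hcmem, _⟩ := hc j hj1 hjk hYne
  obtain ⟨u0, hu0, hcu0⟩ := Finset.mem_image.mp hcmem
  have hu0Y : u0 ∈ Y j := by
    rcases hAj j hj1 hjk hYne with ⟨_, heq⟩ | ⟨_, m, hm, _, heq⟩
    · exact (Finset.mem_filter.mp (heq ▸ hu0)).1
    · have := heq ▸ hu0
      rw [Finset.mem_singleton] at this
      exact this ▸ hm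
  rw [← hcu0]
  exact key u0 hu0Y
end

section
/- There is a family of instances showing the d-approximation of MBF is tight: for the star K_{1,d} where the center has budget 1, each of the d leaves has budget 2, and B = 2d, the maximum B-budgeted independent set has cardinality d, while the MBF greedy algorithm (minimum budget first) selects only the center vertex, a solution of cardinality 1. -/
/-- `S` is an independent set in `G`: no two vertices of `S` are adjacent. -/
def SimpleGraph.IsIndepSetOrig {V : Type*} (G : SimpleGraph V) (S : Set V) : Prop :=
  ∀ u ∈ S, ∀ v ∈ S, ¬ G.Adj u v

attribute [local instance] Classical.propDecidable

lemma mbf_leaves (d : ℕ) (l : List (Fin d)) (rem : ℕ) :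
    mbf (completeBipartiteGraph (Fin 1) (Fin d))
        (Sum.elim (fun _ => 1) (fun _ => 2))
        (l.map Sum.inr) [Sum.inl 0] rem = [Sum.inl 0] := by
  induction l generalizing rem with
  | nil => simp [mbf]
  | cons x xs ih =>
      simp only [List.map_cons, mbf]
      split
      · rfl
      · rw [if_neg, ih]
        push_neg
        exact ⟨Sum.inl 0, by simp, by simp⟩

/-- Tightness of the `d`-approximation of MBF: on the star `K_{1,d}` (`d ≥ 1`)
with center budget `1`, leaf budgets `2` and `B = 2d`, the maximum `B`-budgeted
independent set has cardinality `d`, while MBF (which processes the center first,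
as it has minimum budget) returns only the center, a solution of cardinality 1. -/
theorem stmt_5 (d : ℕ) (hd : 1 ≤ d) :
    IsGreatest {m : ℕ | ∃ S : Finset (Fin 1 ⊕ Fin d),
        (completeBipartiteGraph (Fin 1) (Fin d)).IsIndepSetOrig ↑S ∧
        ∑ v ∈ S, Sum.elim (fun _ => 1) (fun _ => 2) v ≤ 2 * d ∧ S.card = m} d ∧
    mbf (completeBipartiteGraph (Fin 1) (Fin d))
        (Sum.elim (fun _ => 1) (fun _ => 2))
        (Sum.inl 0 :: (List.finRange d).map Sum.inr) [] (2 * d)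
      = [Sum.inl 0] := by
  constructor
  · constructor
    · refine ⟨Finset.univ.image Sum.inr, ?_, ?_, ?_⟩
      · rintro u hu v hv hadj
        simp only [Finset.coe_image, Set.mem_image] at hu hv
        obtain ⟨a, -, rfl⟩ := hu
        obtain ⟨c, -, rfl⟩ := hv
        simp at hadj
      · rw [Finset.sum_image (by simp; exact Sum.inr_injective)]
        simp [mul_comm]
      · rw [Finset.card_image_of_injective _ Sum.inr_injective]
        simp
    · rintro m ⟨S, hind, hsum, rfl⟩
      by_cases hc : Sum.inl 0 ∈ S
      · -- S ⊆ {center}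
        have hsub : S ⊆ {Sum.inl 0} := by
          intro v hv
          rcases v with a | c
          · simp [Fin.fin_one_eq_zero a]
          · exact absurd (by simp : (completeBipartiteGraph (Fin 1) (Fin d)).Adj (Sum.inl 0) (Sum.inr c)) (hind _ hc _ hv)
        calc S.card ≤ 1 := by simpa using Finset.card_le_card hsub
          _ ≤ d := hd
      · have hsub : S ⊆ Finset.univ.image Sum.inr := by
          intro v hv
          rcases v with a | c
          · rw [Fin.fin_one_eq_zero a] at hv; exact absurd hv hc
          · simp
        calc S.card ≤ _ := Finset.card_le_card hsub
          _ ≤ d := by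
            rw [Finset.card_image_of_injective _ Sum.inr_injective]; simp
  · rw [mbf]
    rw [if_neg (by simp; omega), if_pos (by simp)]
    simpa using mbf_leaves d (List.finRange d) (2 * d - 1)
end

section
/- MWBIS is NP-hard even on star trees: KNAPSACK reduces to MWBIS on K_{1,n}. Given a KNAPSACK instance with n objects of weights w_i, sizes s_i, and capacity B, construct K_{1,n} where leaf i has weight w_i and budget s_i, and the center has budget B+1 (any weight); then KNAPSACK has a solution of value at least k if and only if K_{1,n} has a B-budgeted independent set of weight at least k. -/
/-- KNAPSACK reduces to MWBIS on the star `K_{1,n}`: with leaf `i` carrying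
weight `w i` and budget `s i`, and the center carrying budget `B + 1` (and an
arbitrary weight `wc`), KNAPSACK has a solution of value at least `k` iff the
star has a `B`-budgeted independent set of weight at least `k`. -/
theorem stmt_15 (n : ℕ) (w : Fin n → ℝ) (hw : ∀ i, 0 ≤ w i)
    (s : Fin n → ℕ) (hs : ∀ i, 0 < s i) (B : ℕ) (wc : ℝ) (k : ℝ) :
    (∃ T : Finset (Fin n), (∑ i ∈ T, s i) ≤ B ∧ k ≤ ∑ i ∈ T, w i) ↔
    (∃ S : Finset (Fin 1 ⊕ Fin n),
      (completeBipartiteGraph (Fin 1) (Fin n)).IsIndepSet' ↑S ∧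
      (∑ v ∈ S, Sum.elim (fun _ => B + 1) s v) ≤ B ∧
      k ≤ ∑ v ∈ S, Sum.elim (fun _ => wc) w v) := by
  constructor
  · rintro ⟨T, h1, h2⟩
    refine ⟨T.map ⟨Sum.inr, Sum.inr_injective⟩, ?_, ?_, ?_⟩
    · rintro u hu v hv hadj
      simp only [Finset.coe_map, Set.mem_image, Finset.mem_coe] at hu hv
      obtain ⟨a, -, rfl⟩ := hu
      obtain ⟨b, -, rfl⟩ := hv
      simp at hadj
    · simpa using h1
    · simpa using h2
  · rintro ⟨S, hind, h1, h2⟩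
    have hnoinl : ∀ a, Sum.inl a ∉ S := by
      intro a ha
      have := Finset.single_le_sum (f := fun v => Sum.elim (fun _ => B + 1) s v)
        (fun v _ => Nat.zero_le _) ha
      simp at this
      omega
    have hS : S = (S.preimage Sum.inr Sum.inr_injective.injOn).map
        ⟨Sum.inr, Sum.inr_injective⟩ := by
      ext v
      cases v with
      | inl a => simp [hnoinl a]
      | inr b => simp
    refine ⟨S.preimage Sum.inr Sum.inr_injective.injOn, ?_, ?_⟩
    · rw [hS] at h1; simpa using h1
    · rw [hS] at h2; simpa using h2
end

section
/- In the MBF analysis on a (d+1)-claw free graph, if A = {v_{i_1},…,v_{i_k}} is the MBF output disjoint from an optimum A*, and the sets A_1*,…,A_k* are defined as in the charging argument (A_j* is the set of at most d vertices of Y_j adjacent to v_{i_j}, or the single minimum-budget vertex of Y_j if there are none), then A* \ (A_1* ∪ … ∪ A_k*) = ∅, i.e., the sets A_j* cover all of A*. -/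
attribute [local instance] Classical.propDecidable

private lemma mbf_run {n : ℕ} (G : SimpleGraph (Fin n)) (b : Fin n → ℕ)
    (hmono : Monotone b) :
    ∀ (L Acc : List (Fin n)) (rem : ℕ), L.Pairwise (· < ·) →
    ∃ T : List (Fin n), mbf G b L Acc rem = Acc ++ T ∧ T.Sublist L ∧
      (T.map b).sum ≤ rem ∧
      (∀ w ∈ L, w ∉ Acc ++ T → (∀ a ∈ Acc ++ T, ¬ G.Adj w a) →
        rem < (T.map b).sum + b w) ∧
      (∀ u x, u ∈ L → u ∉ Acc ++ T → x ∈ T → u < x →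
        ∃ a, G.Adj u a ∧ ∃ P Q, Acc ++ T = P ++ a :: Q ∧ x ∈ Q) := by
  intro L
  induction L with
  | nil =>
    intro Acc rem _
    exact ⟨[], by simp [mbf], by simp, by simp, by simp, by simp⟩
  | cons v rest ih =>
    intro Acc rem hsort
    have hsort' : rest.Pairwise (· < ·) := hsort.of_cons
    have hvlt : ∀ x ∈ rest, v < x := fun x hx => List.rel_of_pairwise_cons hsort hx
    by_cases h1 : rem < b v
    · refine ⟨[], by rw [mbf, if_pos h1]; simp, List.nil_sublist _, by simp, ?_, by simp⟩
      intro w hw _ _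
      have hble : b v ≤ b w := by
        rcases List.mem_cons.mp hw with rfl | hw
        · exact le_refl _
        · exact hmono (hvlt w hw).le
      simpa using lt_of_lt_of_le h1 hble
    · by_cases h2 : ∀ u ∈ Acc, ¬ G.Adj v u
      · obtain ⟨T', hT', hsub, hsum, hstop, hadje⟩ := ih (Acc ++ [v]) (rem - b v) hsort'
        have hassoc : (Acc ++ [v]) ++ T' = Acc ++ (v :: T') := by simp
        have hble : b v ≤ rem := le_of_not_gt h1
        refine ⟨v :: T', ?_, hsub.cons_cons v, ?_, ?_, ?_⟩
        · rw [mbf, if_neg h1, if_pos h2, hT', hassoc]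
        · simp only [List.map_cons, List.sum_cons]
          omega
        · intro w hw hwnot hwnadj
          rcases List.mem_cons.mp hw with rfl | hw
          · exact absurd (by simp) hwnot
          · have := hstop w hw (by rw [hassoc]; exact hwnot) (by rw [hassoc]; exact hwnadj)
            simp only [List.map_cons, List.sum_cons]
            omega
        · intro u x hu hunot hx hux
          have hune : u ≠ v := fun h => hunot (h ▸ (by simp))
          have hu' : u ∈ rest := (List.mem_cons.mp hu).resolve_left hune
          rcases List.mem_cons.mp hx with rfl | hx
          · exact absurd (hvlt u hu') (asymm hux)
          · obtain ⟨a, ha, P, Q, hPQ, hxQ⟩ :=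
              hadje u x hu' (by rw [hassoc]; exact hunot) hx hux
            exact ⟨a, ha, P, Q, by rw [← hassoc, hPQ], hxQ⟩
      · obtain ⟨T', hT', hsub, hsum, hstop, hadje⟩ := ih Acc rem hsort'
        push_neg at h2
        obtain ⟨u0, hu0, hadj0⟩ := h2
        refine ⟨T', ?_, hsub.cons _, hsum, ?_, ?_⟩
        · rw [mbf, if_neg h1, if_neg (by push_neg; exact ⟨u0, hu0, hadj0⟩), hT']
        · intro w hw hwnot hwnadj
          rcases List.mem_cons.mp hw with rfl | hw
          · exact absurd hadj0 (hwnadj u0 (by simp [hu0]))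
          · exact hstop w hw hwnot hwnadj
        · intro u x hu hunot hx hux
          rcases List.mem_cons.mp hu with rfl | hu
          · obtain ⟨P, Q0, hPQ⟩ := List.append_of_mem hu0
            exact ⟨u0, hadj0, P, Q0 ++ T', by rw [hPQ]; simp, by simp [hx]⟩
          · exact hadje u x hu hunot hx hux
/-- MBF covering lemma: with `A = [v_{i_1},…,v_{i_k}]` the MBF output on a
`(d+1)`-claw free graph, `A*` an optimum `B`-budgeted independent set disjoint
from `A`, and the charging sets defined inductively (`Y_1 = A*`;
`A_j* = X_j`, the vertices of `Y_j` adjacent to `v_{i_j}`, if nonempty, else the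
singleton of a minimum-budget vertex of `Y_j`; `Y_{j+1} = Y_j \ A_j*`), the sets
`A_1*,…,A_k*` cover all of `A*`: `A* \ (A_1* ∪ … ∪ A_k*) = ∅`. -/
theorem stmt_18 {n : ℕ} (hn : 0 < n) (G : SimpleGraph (Fin n)) (d : ℕ)
    (hfree : IsEmpty (completeBipartiteGraph (Fin 1) (Fin (d + 1)) ↪g G))
    (b : Fin n → ℕ) (hb : ∀ v, 0 < b v) (hmono : Monotone b) (B : ℕ)
    (A : List (Fin n)) (hA : A = mbf G b (List.finRange n) [] B)
    (k : ℕ) (hk : k = A.length)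
    (Astar : Finset (Fin n)) (hind : G.IsIndepSet' ↑Astar)
    (hbud : ∑ v ∈ Astar, b v ≤ B)
    (hopt : ∀ S : Finset (Fin n), G.IsIndepSet' ↑S → ∑ v ∈ S, b v ≤ B →
      S.card ≤ Astar.card)
    (hdisj : ∀ v ∈ A, v ∉ Astar)
    (Y Aj : ℕ → Finset (Fin n))
    (hY1 : Y 1 = Astar)
    (hYsucc : ∀ j, Y (j + 1) = Y j \ Aj j)
    (hAjEmpty : ∀ j, Y j = ∅ → Aj j = ∅)
    (hAj : ∀ j, 1 ≤ j → j ≤ k → Y j ≠ ∅ →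
      (((Y j).filter (fun u => G.Adj (A.getD (j - 1) ⟨0, hn⟩) u) ≠ ∅ ∧
        Aj j = (Y j).filter (fun u => G.Adj (A.getD (j - 1) ⟨0, hn⟩) u)) ∨
       ((Y j).filter (fun u => G.Adj (A.getD (j - 1) ⟨0, hn⟩) u) = ∅ ∧
        ∃ m ∈ Y j, (∀ u ∈ Y j, b m ≤ b u) ∧ Aj j = {m}))) :
    Astar \ (Finset.Icc 1 k).biUnion Aj = ∅ := by
  classical
  have hsortfin : (List.finRange n).Pairwise (· < ·) := by
    have : List.finRange n = List.ofFn (fun i : Fin n => i) := rfl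
    rw [this, List.pairwise_ofFn]
    exact fun i j h => h
  obtain ⟨T, hT, hsubl, hsum, hstop, hadje⟩ := mbf_run G b hmono (List.finRange n) [] B hsortfin
  have hAT : A = T := by rw [hA, hT]; simp
  subst hAT
  simp only [List.nil_append] at hstop hadje
  -- basic facts
  have hYstep : ∀ j, Y (j + 1) ⊆ Y j := fun j => by rw [hYsucc]; exact Finset.sdiff_subset
  have hYmon : ∀ i j, i ≤ j → Y j ⊆ Y i := by
    intro i j hij
    induction hij with
    | refl => exact subset_rfl
    | step _ ihs => exact (hYstep _).trans ihs
  rw [Finset.eq_empty_iff_forall_notMem]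
  intro w hw
  rw [Finset.mem_sdiff, Finset.mem_biUnion] at hw
  obtain ⟨hwA, hwB⟩ := hw
  push_neg at hwB
  have hwAj : ∀ j, 1 ≤ j → j ≤ k → w ∉ Aj j := fun j h1 h2 =>
    hwB j (Finset.mem_Icc.mpr ⟨h1, h2⟩)
  have hwY : ∀ j, 1 ≤ j → j ≤ k + 1 → w ∈ Y j := by
    intro j
    induction j with
    | zero => omega
    | succ m ihm =>
      intro _ h2
      rcases Nat.eq_zero_or_pos m with rfl | hm
      · simpa [hY1] using hwA
      · rw [hYsucc, Finset.mem_sdiff]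
        exact ⟨ihm hm (by omega), hwAj m hm (by omega)⟩
  have hYne : ∀ j, 1 ≤ j → j ≤ k → Y j ≠ ∅ := fun j h1 h2 =>
    Finset.nonempty_iff_ne_empty.mp ⟨w, hwY j h1 (by omega)⟩
  have hAnodup : (A).Nodup := hsubl.nodup (List.nodup_finRange n)
  have hAsorted : (A).Pairwise (· < ·) := hsortfin.sublist hsubl
  have hgetD : ∀ (i : ℕ) (hi : i < A.length), A.getD i ⟨0, hn⟩ = A[i]'hi :=
    fun i hi => List.getD_eq_getElem A ⟨0, hn⟩ hi
  -- w is not adjacent to any selected vertex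
  have hnonadjw : ∀ a ∈ A, ¬ G.Adj w a := by
    intro a ha hadj'
    obtain ⟨i, hi, rfl⟩ := List.mem_iff_getElem.mp ha
    have hgd : A.getD (i + 1 - 1) ⟨0, hn⟩ = A[i] := by
      simpa using hgetD i hi
    have h1 : 1 ≤ i + 1 := by omega
    have h2 : i + 1 ≤ k := by omega
    rcases hAj (i + 1) h1 h2 (hYne _ h1 h2) with ⟨hne, hEq⟩ | ⟨hfe, _⟩
    · apply hwAj (i + 1) h1 h2
      rw [hEq, Finset.mem_filter]
      exact ⟨hwY _ h1 (by omega), by rw [hgd]; exact hadj'.symm⟩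
    · have : w ∈ (Y (i+1)).filter (fun u => G.Adj (A.getD (i+1-1) ⟨0, hn⟩) u) :=
        Finset.mem_filter.mpr ⟨hwY _ h1 (by omega), by rw [hgd]; exact hadj'.symm⟩
      rw [hfe] at this
      simp at this
  -- Lemma: the budget of the j-th selected vertex is at most that of any vertex of Y j
  have L1 : ∀ j, 1 ≤ j → j ≤ k → ∀ u ∈ Y j, b (A.getD (j - 1) ⟨0, hn⟩) ≤ b u := by
    intro j hj1 hjk u hu
    by_contra hlt
    push_neg at hlt
    set x := A.getD (j - 1) ⟨0, hn⟩ with hxdef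
    have hjlen : j - 1 < A.length := by omega
    have hxel : x = A[j - 1] := hgetD _ hjlen
    have hulx : u < x := by
      by_contra hge
      push_neg at hge
      exact absurd (hmono hge) (by omega)
    have huA : u ∈ Astar := hY1 ▸ (hYmon 1 j hj1 hu)
    have hunotA : u ∉ A := fun h => hdisj u h huA
    have hxT : x ∈ A := hxel ▸ List.getElem_mem hjlen
    obtain ⟨a, hadja, P, Q, hPQ, hxQ⟩ :=
      hadje u x (List.mem_finRange u) hunotA hxT hulx
    -- a occurs strictly before x in A, hence a = A[ia] with ia < j - 1
    have haltx : a < x := by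
      have hsQ : (a :: Q).Pairwise (· < ·) := by
        have := hPQ ▸ hAsorted
        exact this.sublist (List.sublist_append_right P _)
      exact List.rel_of_pairwise_cons hsQ hxQ
    have haT : a ∈ A := by rw [hPQ]; simp
    obtain ⟨ia, hia, hiaeq⟩ := List.mem_iff_getElem.mp haT
    have hpw := List.pairwise_iff_getElem.mp hAsorted
    have hialt : ia < j - 1 := by
      by_contra hge
      push_neg at hge
      rcases Nat.eq_or_lt_of_le hge with heq | hlt2
      · subst heq
        exact lt_irrefl a ((hxel.trans hiaeq) ▸ haltx)
      · have := hpw (j - 1) ia hjlen hia hlt2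
        rw [hiaeq, ← hxel] at this
        exact absurd haltx (asymm this)
    -- now u lies in the filter at step ia + 1, so u ∈ Aj (ia+1), contradicting u ∈ Y (ia+2)
    have hi1 : 1 ≤ ia + 1 := by omega
    have hi2 : ia + 1 ≤ k := by omega
    have hgd2 : A.getD (ia + 1 - 1) ⟨0, hn⟩ = a := by
      simpa [hiaeq] using hgetD ia hia
    have huY1 : u ∈ Y (ia + 1) := hYmon _ j (by omega) hu
    have huY2 : u ∈ Y (ia + 2) := hYmon _ j (by omega) hu
    have hufil : u ∈ (Y (ia + 1)).filter
        (fun v => G.Adj (A.getD (ia + 1 - 1) ⟨0, hn⟩) v) :=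
      Finset.mem_filter.mpr ⟨huY1, by rw [hgd2]; exact hadja.symm⟩
    rcases hAj (ia + 1) hi1 hi2 (hYne _ hi1 hi2) with ⟨_, hEq⟩ | ⟨hfe, _⟩
    · have huAj : u ∈ Aj (ia + 1) := by rw [hEq]; exact hufil
      have : u ∈ Y (ia + 1) \ Aj (ia + 1) := by
        rw [← hYsucc]; exact huY2
      exact (Finset.mem_sdiff.mp this).2 huAj
    · rw [hfe] at hufil; simp at hufil
  -- Aj j is nonempty and contained in Y j
  have hAjprop : ∀ j, 1 ≤ j → j ≤ k → (Aj j).Nonempty ∧ Aj j ⊆ Y j := by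
    intro j h1 h2
    rcases hAj j h1 h2 (hYne j h1 h2) with ⟨hne, hEq⟩ | ⟨_, m, hm, _, hEq⟩
    · rw [hEq]
      exact ⟨Finset.nonempty_iff_ne_empty.mpr hne, Finset.filter_subset _ _⟩
    · rw [hEq]
      exact ⟨⟨m, Finset.mem_singleton_self m⟩, Finset.singleton_subset_iff.mpr hm⟩
  -- the Aj are pairwise disjoint
  have hAjdisj : ∀ j1 j2, 1 ≤ j1 → j1 < j2 → j2 ≤ k → ∀ z, z ∈ Aj j1 → z ∈ Aj j2 → False := by
    intro j1 j2 h1 h12 h2 z hz1 hz2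
    have hzY2 : z ∈ Y j2 := (hAjprop j2 (by omega) h2).2 hz2
    have hzY1' : z ∈ Y (j1 + 1) := hYmon _ j2 (by omega) hzY2
    rw [hYsucc, Finset.mem_sdiff] at hzY1'
    exact hzY1'.2 hz1
  -- representative choice
  set usel : ℕ → Fin n := fun j => if h : (Aj j).Nonempty then h.choose else ⟨0, hn⟩ with husel
  have huselmem : ∀ j, 1 ≤ j → j ≤ k → usel j ∈ Aj j := by
    intro j h1 h2
    have hne := (hAjprop j h1 h2).1
    simp only [husel, dif_pos hne]
    exact hne.choose_spec
  have huselY : ∀ j, 1 ≤ j → j ≤ k → usel j ∈ Y j := fun j h1 h2 =>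
    (hAjprop j h1 h2).2 (huselmem j h1 h2)
  have huselAstar : ∀ j, 1 ≤ j → j ≤ k → usel j ∈ Astar := fun j h1 h2 =>
    hY1 ▸ hYmon 1 j h1 (huselY j h1 h2)
  have huselne : ∀ j, 1 ≤ j → j ≤ k → usel j ≠ w := by
    intro j h1 h2 heq
    exact hwAj j h1 h2 (heq ▸ huselmem j h1 h2)
  have huselinj : Set.InjOn usel (Finset.Icc 1 k) := by
    intro j1 hj1 j2 hj2 heq
    simp only [Finset.coe_Icc, Set.mem_Icc] at hj1 hj2
    by_contra hne
    rcases Nat.lt_or_ge j1 j2 with hlt | hge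
    · exact hAjdisj j1 j2 hj1.1 hlt hj2.2 (usel j1) (huselmem j1 hj1.1 hj1.2)
        (heq ▸ huselmem j2 hj2.1 hj2.2)
    · have hlt : j2 < j1 := by omega
      exact hAjdisj j2 j1 hj2.1 hlt hj1.2 (usel j2) (huselmem j2 hj2.1 hj2.2)
        (heq ▸ huselmem j1 hj1.1 hj1.2)
  -- list sum as a Finset sum
  have hsumA : (A.map b).sum = ∑ i ∈ Finset.range k, b (A.getD i ⟨0, hn⟩) := by
    rw [← List.ofFn_getElem_eq_map A b, List.sum_ofFn, hk]
    rw [← Fin.sum_univ_eq_sum_range (fun i => b (A.getD i ⟨0, hn⟩)) A.length]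
    exact Finset.sum_congr rfl fun i _ => by rw [hgetD i i.isLt]
  have hIcc : ∑ j ∈ Finset.Icc 1 k, b (A.getD (j - 1) ⟨0, hn⟩)
      = ∑ i ∈ Finset.range k, b (A.getD i ⟨0, hn⟩) := by
    rw [← Finset.Ico_add_one_right_eq_Icc, Finset.sum_Ico_eq_sum_range]
    simp
  -- the key chain of inequalities
  have hchain1 : ∑ j ∈ Finset.Icc 1 k, b (A.getD (j - 1) ⟨0, hn⟩)
      ≤ ∑ j ∈ Finset.Icc 1 k, b (usel j) := by
    refine Finset.sum_le_sum fun j hj => ?_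
    rw [Finset.mem_Icc] at hj
    exact L1 j hj.1 hj.2 (usel j) (huselY j hj.1 hj.2)
  have hchain2 : ∑ j ∈ Finset.Icc 1 k, b (usel j)
      = ∑ v ∈ (Finset.Icc 1 k).image usel, b v :=
    (Finset.sum_image fun x hx y hy h => huselinj (by simpa using hx) (by simpa using hy) h).symm
  have hchain3 : (Finset.Icc 1 k).image usel ⊆ Astar.erase w := by
    intro v hv
    obtain ⟨j, hj, rfl⟩ := Finset.mem_image.mp hv
    rw [Finset.mem_Icc] at hj
    exact Finset.mem_erase.mpr ⟨huselne j hj.1 hj.2, huselAstar j hj.1 hj.2⟩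
  have hchain4 : ∑ v ∈ (Finset.Icc 1 k).image usel, b v ≤ ∑ v ∈ Astar.erase w, b v :=
    Finset.sum_le_sum_of_subset hchain3
  have hchain5 : ∑ v ∈ Astar.erase w, b v + b w = ∑ v ∈ Astar, b v :=
    Finset.sum_erase_add Astar b hwA
  -- MBF would have selected w
  have hwnotT : w ∉ A := fun h => hdisj w h hwA
  have hfin : B < (A.map b).sum + b w :=
    hstop w (List.mem_finRange w) hwnotT hnonadjw
  rw [hsumA, ← hIcc] at hfin
  omega
end
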